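/- Let φ be a Schwartz function on ℝ with φ ≥ 0, ∫ φ(y) dy = 1, and Fourier transform φ̂ compactly supported with φ̂(p) = 0 whenever |p| ≥ ρ_φ for some ρ_φ > 0. For L ∈ ℕ and R > 0 define the lattice averaging kernel ϕ(ξ) := R^{−1} Σ_{n∈ℤ} φ((ξ − Ln)/R), ξ ∈ ℝ. If R ≥ 2ρ_φ, then for every k ∈ Λ_L* and every ξ ∈ ℝ: Σ_{x∈Λ_L} ϕ(ξ − x) e^{−2πix·k} = e^{−2πiξ·k} φ̂(−Rk). -/

import Mathlib

open Real MeasureTheory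

/-- The discrete circle of `L` sites, represented by integers:
`{−(L−1)/2, …, (L−1)/2}` for odd `L` and `{−L/2+1, …, L/2}` for even `L`. -/
noncomputable def Lambda (L : ℕ) : Finset ℤ := Finset.Ioc ((L : ℤ) / 2 - L) ((L : ℤ) / 2)

/-- The lattice averaging kernel `ϕ(ξ) = R⁻¹ Σ_{n∈ℤ} φ((ξ − Ln)/R)`. -/
noncomputable def latticeKernel (φ : SchwartzMap ℝ ℝ) (L R : ℝ) (ξ : ℝ) : ℝ :=
  R⁻¹ * ∑' n : ℤ, φ ((ξ - L * n) / R)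

/-- The Fourier transform `φ̂(p) = ∫ φ(y) e^{−2πipy} dy`. -/
noncomputable def fourierHat (φ : SchwartzMap ℝ ℝ) (p : ℝ) : ℂ :=
  ∫ y : ℝ, (φ y : ℂ) * Complex.exp (-(2 * π * p * y) * Complex.I)

/-- The bijection `Λ_L × ℤ ≃ ℤ`, `(x, n) ↦ x + L n`. -/
def lambdaEquiv (L : ℕ) (hL : 0 < L) : (Lambda L) × ℤ ≃ ℤ where
  toFun q := (q.1 : ℤ) + L * q.2
  invFun m := (⟨(L : ℤ) / 2 - ((L : ℤ) / 2 - m) % L, by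
      have hL' : (0 : ℤ) < L := by exact_mod_cast hL
      have h1 : 0 ≤ ((L : ℤ) / 2 - m) % L := Int.emod_nonneg _ hL'.ne'
      have h2 : ((L : ℤ) / 2 - m) % L < L := Int.emod_lt_of_pos _ hL'
      simp only [Lambda, Finset.mem_Ioc]
      omega⟩, -(((L : ℤ) / 2 - m) / L))
  left_inv := by
    rintro ⟨⟨x, hx⟩, n⟩
    have hL' : (0 : ℤ) < L := by exact_mod_cast hL
    simp only [Lambda, Finset.mem_Ioc] at hx
    have hcx1 : 0 ≤ (L : ℤ) / 2 - x := by omega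
    have hcx2 : (L : ℤ) / 2 - x < L := by omega
    have key : (L : ℤ) / 2 - (x + L * n) = ((L : ℤ) / 2 - x) + (-n) * L := by ring
    have hmod : ((L : ℤ) / 2 - (x + L * n)) % L = (L : ℤ) / 2 - x := by
      rw [key, Int.add_mul_emod_self_right, Int.emod_eq_of_lt hcx1 hcx2]
    have hdiv : ((L : ℤ) / 2 - (x + L * n)) / L = -n := by
      rw [key, Int.add_mul_ediv_right _ _ hL'.ne', Int.ediv_eq_zero_of_lt hcx1 hcx2, zero_add]
    ext
    · simp only [hmod]; omega
    · simp only [hdiv, neg_neg]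
  right_inv := by
    intro m
    have hL' : (0 : ℤ) < L := by exact_mod_cast hL
    have := Int.emod_add_mul_ediv ((L : ℤ) / 2 - m) L
    simp only [mul_neg]
    omega

/-- If `R ≥ 2ρ_φ`, then for every `k ∈ Λ_L*` (written `k = p/L` with
`p ∈ Λ_L`) and every `ξ ∈ ℝ`:
`Σ_{x∈Λ_L} ϕ(ξ − x) e^{−2πix·k} = e^{−2πiξ·k} φ̂(−Rk)`. -/
theorem latticeKernel_discrete_fourier (φ : SchwartzMap ℝ ℝ)
    (hpos : ∀ y : ℝ, 0 ≤ φ y)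
    (hnorm : ∫ y : ℝ, φ y = 1)
    (ρ : ℝ) (hρ : 0 < ρ)
    (hsupp : ∀ p : ℝ, ρ ≤ |p| → fourierHat φ p = 0)
    (L : ℕ) (hL : 0 < L) (R : ℝ) (hR : 2 * ρ ≤ R) :
    ∀ p ∈ Lambda L, ∀ ξ : ℝ,
      ∑ x ∈ Lambda L,
          (latticeKernel φ L R (ξ - x) : ℂ)
            * Complex.exp (-(2 * π * (x : ℝ) * ((p : ℝ) / L)) * Complex.I)
        = Complex.exp (-(2 * π * ξ * ((p : ℝ) / L)) * Complex.I)
            * fourierHat φ (-(R * ((p : ℝ) / L))) := by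
  intro p hp ξ
  have hRpos : 0 < R := lt_of_lt_of_le (by linarith) hR
  have hLpos : (0 : ℝ) < L := by exact_mod_cast hL
  set k : ℝ := (p : ℝ) / L with hkdef
  -- bounds on k
  have hp' : (L : ℤ) / 2 - L < p ∧ p ≤ (L : ℤ) / 2 := by
    simpa [Lambda, Finset.mem_Ioc] using hp
  have h2p : -(L : ℤ) < 2 * p ∧ 2 * p ≤ L := by omega
  have hk1 : -(1 / 2 : ℝ) < k := by
    rw [hkdef, lt_div_iff₀ hLpos]
    have : -(L : ℝ) < 2 * p := by exact_mod_cast h2p.1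
    linarith
  have hk2 : k ≤ 1 / 2 := by
    rw [hkdef, div_le_iff₀ hLpos]
    have : 2 * (p : ℝ) ≤ L := by exact_mod_cast h2p.2
    linarith
  -- the function for Poisson summation
  set f : ℝ → ℂ := fun y => (φ ((ξ - y) / R) : ℂ) * Complex.exp (-(2 * π * y * k) * Complex.I)
    with hfdef
  have hnormf : ∀ y : ℝ, ‖f y‖ = |φ ((ξ - y) / R)| := by
    intro y
    rw [hfdef]
    simp only [norm_mul]
    rw [show (-(2 * π * y * k) : ℂ) * Complex.I = ((-(2 * π * y * k) : ℝ) : ℂ) * Complex.I by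
       push_cast; ring]
    rw [Complex.norm_exp_ofReal_mul_I, mul_one, Complex.norm_real, Real.norm_eq_abs]
  have hcont : Continuous f := by
    apply Continuous.mul
    · exact Complex.continuous_ofReal.comp (φ.continuous.comp (by fun_prop))
    · exact Complex.continuous_exp.comp (by fun_prop)
  -- decay
  have hO : f =O[Filter.cocompact ℝ] (fun y => |y| ^ (-2 : ℝ)) := by
    obtain ⟨C, hCpos, hC⟩ := φ.decay 2 0
    rw [Asymptotics.isBigO_iff]
    refine ⟨C * (2 * R) ^ 2, ?_⟩
    have hev : ∀ᶠ y : ℝ in Filter.cocompact ℝ, 1 + 2 * |ξ| ≤ |y| := by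
      rw [cocompact_eq_atBot_atTop]
      rw [Filter.eventually_sup]
      constructor
      · filter_upwards [Filter.eventually_le_atBot (-(1 + 2 * |ξ|))] with y hy
        have hy0 : y ≤ 0 := le_trans hy (by linarith [abs_nonneg ξ])
        rw [abs_of_nonpos hy0]
        linarith
      · filter_upwards [Filter.eventually_ge_atTop (1 + 2 * |ξ|)] with y hy
        rw [abs_of_nonneg (show (0:ℝ) ≤ y by linarith [abs_nonneg ξ])]
        exact hy
    filter_upwards [hev] with y hy
    have hy1 : (1 : ℝ) ≤ |y| := by linarith [abs_nonneg ξ]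
    have hy0 : y ≠ 0 := by intro h; rw [h, abs_zero] at hy1; linarith
    set u : ℝ := (ξ - y) / R with hudef
    have hu : |y| / (2 * R) ≤ |u| := by
      rw [hudef, abs_div, abs_of_pos hRpos, div_le_div_iff₀ (by positivity) hRpos]
      have h1 : |y| - |ξ| ≤ |ξ - y| := by
        have := abs_sub_abs_le_abs_sub y ξ
        rw [abs_sub_comm] at this
        linarith
      have h2 : 2 * |ξ| ≤ |y| := by linarith
      nlinarith [abs_nonneg (ξ - y)]
    have hCu : |u| ^ 2 * |φ u| ≤ C := by
      have := hC u
      rwa [norm_iteratedFDeriv_zero, Real.norm_eq_abs, Real.norm_eq_abs] at this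
    have hrpow : ‖|y| ^ (-2 : ℝ)‖ = (|y| ^ 2)⁻¹ := by
      have h1 : |y| ^ (-2 : ℝ) = (|y| ^ (2 : ℕ))⁻¹ := by
        rw [← Real.rpow_natCast |y| 2, ← Real.rpow_neg (abs_nonneg y)]
        norm_num
      rw [Real.norm_eq_abs, h1, abs_of_nonneg (by positivity)]
    rw [hnormf, hrpow]
    have hy2 : (0:ℝ) < |y| ^ 2 := by positivity
    have h3 : |y| ^ 2 ≤ (2 * R) ^ 2 * |u| ^ 2 := by
      have h := pow_le_pow_left₀ (by positivity : (0:ℝ) ≤ |y| / (2 * R)) hu 2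
      rw [div_pow, div_le_iff₀ (by positivity : (0:ℝ) < (2 * R) ^ 2)] at h
      linarith
    have h5 : |φ u| * |y| ^ 2 ≤ C * (2 * R) ^ 2 := by nlinarith [hCu, h3, abs_nonneg (φ u)]
    rw [← div_eq_mul_inv, le_div_iff₀ hy2]
    exact h5
  -- summability of f over ℤ
  have hsummable : Summable fun m : ℤ => f m :=
    summable_of_isBigO (Real.summable_abs_int_rpow one_lt_two)
      (hO.comp_tendsto Int.tendsto_coe_cofinite)
  -- Fourier transform of f
  have hF : ∀ w : ℝ, FourierTransform.fourier f w
      = (R : ℂ) * Complex.exp (-(2 * π * ξ * (k + w)) * Complex.I)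
          * fourierHat φ (-(R * (k + w))) := by
    intro w
    set G : ℝ → ℂ := fun u => (φ u : ℂ)
        * Complex.exp (-(2 * π * (ξ - R * u) * (k + w)) * Complex.I) with hGdef
    have key : ∀ v : ℝ, Complex.exp ((-2 * π * v * w : ℝ) * Complex.I) • f v
        = (fun t => G (t / R)) (ξ - v) := by
      intro v
      have hRC : (R : ℂ) ≠ 0 := by exact_mod_cast hRpos.ne'
      have haux : ∀ (z a b c : ℂ), a + b = c
          → Complex.exp a * (z * Complex.exp b) = z * Complex.exp c := by
        intro z a b c h
        rw [← h, Complex.exp_add]; ring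
      simp only [hGdef, hfdef, smul_eq_mul]
      exact haux _ _ _ _ (by push_cast; field_simp; ring)
    have hG : ∀ u : ℝ, G u = Complex.exp (-(2 * π * ξ * (k + w)) * Complex.I)
        * ((φ u : ℂ) * Complex.exp (-(2 * π * (-(R * (k + w))) * u) * Complex.I)) := by
      intro u
      have hsplit : Complex.exp (-(2 * π * (ξ - R * u) * (k + w)) * Complex.I)
          = Complex.exp (-(2 * π * ξ * (k + w)) * Complex.I)
            * Complex.exp (-(2 * π * (-(R * (k + w))) * u) * Complex.I) := by
        rw [← Complex.exp_add]; congr 1; push_cast; ring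
      rw [hGdef]
      simp only
      rw [hsplit]
      ring
    calc FourierTransform.fourier f w
        = ∫ v : ℝ, Complex.exp ((-2 * π * v * w : ℝ) * Complex.I) • f v := by
          rw [Real.fourier_real_eq_integral_exp_smul]
      _ = ∫ v : ℝ, (fun t => G (t / R)) (ξ - v) :=
          integral_congr_ae (Filter.Eventually.of_forall key)
      _ = ∫ v : ℝ, (fun t => G (t / R)) v :=
          integral_sub_left_eq_self (fun t => G (t / R)) volume ξ
      _ = |R| • ∫ u : ℝ, G u := Measure.integral_comp_div G R
      _ = (R : ℂ) * ∫ u : ℝ, G u := by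
          rw [abs_of_pos hRpos, Complex.real_smul]
      _ = (R : ℂ) * (Complex.exp (-(2 * π * ξ * (k + w)) * Complex.I)
            * ∫ u : ℝ, (φ u : ℂ) * Complex.exp (-(2 * π * (-(R * (k + w))) * u) * Complex.I)) := by
          rw [integral_congr_ae (Filter.Eventually.of_forall hG), integral_const_mul]
      _ = (R : ℂ) * Complex.exp (-(2 * π * ξ * (k + w)) * Complex.I)
            * fourierHat φ (-(R * (k + w))) := by
          have hint : (∫ u : ℝ, (φ u : ℂ)
                * Complex.exp (-(2 * π * (-(R * (k + w))) * u) * Complex.I))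
              = fourierHat φ (-(R * (k + w))) := by
            rw [fourierHat]
            apply integral_congr_ae
            filter_upwards with y
            congr 2
            push_cast
            ring
          rw [hint]
          ring
  -- vanishing of the Fourier transform at nonzero integers
  have hvanish : ∀ j : ℤ, j ≠ 0 → FourierTransform.fourier f j = 0 := by
    intro j hj
    rw [hF]
    have habs : (1 : ℝ) / 2 ≤ |k + j| := by
      rcases lt_or_ge 0 j with hj1 | hj2
      · have h1 : (1 : ℤ) ≤ j := hj1
        have : (1 : ℝ) ≤ (j : ℝ) := by exact_mod_cast h1
        rw [abs_of_pos (by linarith)]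
        linarith
      · have hj3 : j ≤ -1 := by omega
        have : (j : ℝ) ≤ -1 := by exact_mod_cast hj3
        rw [abs_of_neg (by linarith)]
        linarith
    have : ρ ≤ |(-(R * (k + j)))| := by
      rw [abs_neg, abs_mul, abs_of_pos hRpos]
      calc ρ ≤ R / 2 := by linarith
        _ = R * (1 / 2) := by ring
        _ ≤ R * |k + j| := by
            apply mul_le_mul_of_nonneg_left habs hRpos.le
    rw [hsupp _ this, mul_zero]
  -- Poisson summation
  have hFsummable : Summable fun n : ℤ => FourierTransform.fourier f n :=
    summable_of_ne_finset_zero (s := {0}) fun j hj =>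
      hvanish j (by simpa using hj)
  have hPoisson : ∑' m : ℤ, f m
      = (R : ℂ) * Complex.exp (-(2 * π * ξ * k) * Complex.I) * fourierHat φ (-(R * k)) := by
    have hP := Real.tsum_eq_tsum_fourier_of_rpow_decay_of_summable hcont one_lt_two
      hO hFsummable 0
    simp only [zero_add] at hP
    rw [hP]
    have h0 : ∀ n : ℤ, FourierTransform.fourier f n * (fourier n) ((0 : ℝ) : UnitAddCircle)
        = FourierTransform.fourier f n := by
      intro n
      norm_cast
      rw [fourier_eval_zero, mul_one]
    rw [tsum_congr h0, tsum_eq_single 0 hvanish]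
    have := hF 0
    simpa using this
  -- periodicity of the character and per-term identification
  have hterm : ∀ (x n : ℤ), f (((x + L * n : ℤ) : ℝ))
      = ((φ ((ξ - x - L * n) / R) : ℝ) : ℂ)
          * Complex.exp (-(2 * π * (x : ℝ) * k) * Complex.I) := by
    intro x n
    rw [hfdef]
    simp only
    have harg : (ξ - ((x + L * n : ℤ) : ℝ)) / R = (ξ - (x : ℝ) - (L : ℝ) * (n : ℝ)) / R := by
      push_cast; ring
    rw [harg]
    congr 1
    have hL0 : (L : ℂ) ≠ 0 := by
      exact_mod_cast (show (L : ℝ) ≠ 0 from hLpos.ne')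
    have hsplit : (-(2 * π * (((x + L * n : ℤ) : ℝ)) * k) : ℂ) * Complex.I
        = (-(2 * π * (x : ℝ) * k) : ℂ) * Complex.I
            + ((-(n * p) : ℤ) : ℂ) * (2 * π * Complex.I) := by
      rw [hkdef]
      push_cast
      field_simp
      ring
    rw [hsplit, Complex.exp_add, Complex.exp_int_mul_two_pi_mul_I, mul_one]
  -- rewriting each summand
  have hstep1 : ∀ x : ℤ, ((latticeKernel φ L R (ξ - x) : ℝ) : ℂ)
      * Complex.exp (-(2 * π * (x : ℝ) * k) * Complex.I)
      = (R : ℂ)⁻¹ * ∑' n : ℤ, f (((x + L * n : ℤ) : ℝ)) := by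
    intro x
    rw [latticeKernel, Complex.ofReal_mul, Complex.ofReal_tsum, Complex.ofReal_inv]
    rw [mul_assoc, ← tsum_mul_right]
    congr 1
    exact tsum_congr fun n => (hterm x n).symm
  -- the summability on the product index
  have hcomp : Summable fun q : (Lambda L) × ℤ => f (((lambdaEquiv L hL) q : ℝ)) :=
    ((lambdaEquiv L hL).summable_iff (f := fun m : ℤ => f (m : ℝ))).mpr hsummable
  have hRC : (R : ℂ) ≠ 0 := by exact_mod_cast hRpos.ne'
  have hmain : ∑ x ∈ Lambda L,
      ((latticeKernel φ L R (ξ - x) : ℝ) : ℂ)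
        * Complex.exp (-(2 * π * (x : ℝ) * k) * Complex.I)
      = Complex.exp (-(2 * π * ξ * k) * Complex.I) * fourierHat φ (-(R * k)) := by
    calc ∑ x ∈ Lambda L, ((latticeKernel φ L R (ξ - x) : ℝ) : ℂ)
          * Complex.exp (-(2 * π * (x : ℝ) * k) * Complex.I)
        = ∑ x ∈ Lambda L, (R : ℂ)⁻¹ * ∑' n : ℤ, f (((x + L * n : ℤ) : ℝ)) :=
          Finset.sum_congr rfl fun x _ => hstep1 x
      _ = (R : ℂ)⁻¹ * ∑ x ∈ Lambda L, ∑' n : ℤ, f (((x + L * n : ℤ) : ℝ)) := by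
          rw [Finset.mul_sum]
      _ = (R : ℂ)⁻¹ * ∑' m : ℤ, f m := by
          congr 1
          calc ∑ x ∈ Lambda L, ∑' n : ℤ, f (((x + L * n : ℤ) : ℝ))
              = ∑' x : (Lambda L), ∑' n : ℤ, f ((((x : ℤ) + L * n : ℤ) : ℝ)) :=
                (Finset.tsum_subtype (Lambda L)
                  (fun x : ℤ => ∑' n : ℤ, f (((x + L * n : ℤ) : ℝ)))).symm
            _ = ∑' q : (Lambda L) × ℤ, f (((lambdaEquiv L hL) q : ℝ)) :=
                (Summable.tsum_prod' hcomp fun b => hcomp.prod_factor b).symm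
            _ = ∑' m : ℤ, f m := (lambdaEquiv L hL).tsum_eq fun m : ℤ => f (m : ℝ)
      _ = Complex.exp (-(2 * π * ξ * k) * Complex.I) * fourierHat φ (-(R * k)) := by
          rw [hPoisson, ← mul_assoc, ← mul_assoc, inv_mul_cancel₀ hRC, one_mul]
  -- conclude, identifying the casts
  have hkC : ∀ t : ℝ, Complex.exp (-(2 * π * t * (((p : ℝ) : ℂ) / (L : ℂ))) * Complex.I)
      = Complex.exp (-(2 * π * t * (k : ℂ)) * Complex.I) := by
    intro t
    congr 2
    rw [hkdef]
    push_cast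
    ring
  calc ∑ x ∈ Lambda L, ((latticeKernel φ L R (ξ - x) : ℝ) : ℂ)
        * Complex.exp (-(2 * π * (x : ℝ) * ((p : ℝ) / L)) * Complex.I)
      = ∑ x ∈ Lambda L, ((latticeKernel φ L R (ξ - x) : ℝ) : ℂ)
        * Complex.exp (-(2 * π * (x : ℝ) * k) * Complex.I) :=
        Finset.sum_congr rfl fun x _ => by rw [hkC (x : ℝ)]
    _ = Complex.exp (-(2 * π * ξ * k) * Complex.I) * fourierHat φ (-(R * k)) := hmain
    _ = Complex.exp (-(2 * π * ξ * ((p : ℝ) / L)) * Complex.I)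
          * fourierHat φ (-(R * ((p : ℝ) / L))) := by rw [hkC ξ]
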